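/- Let N ≥ 3, 1 ≤ k ≤ N−1, and let the 3×3 matrix M have rows (1, α10, α20), (α01, α11, α21), (α02, α12, α22) where αij = g_ij(r,k)/g_i0(r,k) with g_i0(r,k), g_i1(r,k), g_i2(r,k) the sums Σ_{m≥0} 1/((3m+i)N+k)^{1+r}, Σ_{m≥0} 1/((3m+i)N+k)^r, Σ_{m≥0} 1/((3m+i)N+k)^{r−1} respectively (i = 0,1,2), r ≥ 3, with the convention that the i=0 family starts at frequency k (i.e., includes m=0 term 1/k^s). Then α01 < α11 < α21 strictly (the ratios g_i1/g_i0 are strictly increasing in i). -/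

import Mathlib

set_option maxHeartbeats 1000000

open Filter

/-- `g i s = Σ_{m≥0} 1/((3m+i)N+k)^s`, the sums appearing in the second-order
Hermite spline construction (the `i = 0` family starts at frequency `k`). -/
noncomputable def gSum (N k i s : ℕ) : ℝ := ∑' m : ℕ, 1 / (((3 * m + i) * N + k : ℕ) : ℝ) ^ s

lemma gSum_eq (N k i s : ℕ) :
    gSum N k i s = ∑' m : ℕ, 1 / (((3 * m * N + (i * N + k) : ℕ) : ℝ)) ^ s := by
  unfold gSum
  congr 1; funext m; congr 3; ring

lemma summable_cube : Summable (fun m : ℕ => 1 / ((m : ℝ) + 1) ^ 3) := by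
  have h := (summable_nat_add_iff 1).2 (Real.summable_one_div_nat_pow.mpr (by norm_num : 1 < 3))
  convert h using 2 with m
  · rfl
  push_cast; ring

lemma tele_hasSum : HasSum (fun m : ℕ => 1 / (((m : ℝ) + 1) * ((m : ℝ) + 2))) 1 := by
  have hnn : ∀ m : ℕ, 0 ≤ 1 / (((m : ℝ) + 1) * ((m : ℝ) + 2)) := by
    intro m; positivity
  rw [hasSum_iff_tendsto_nat_of_nonneg hnn]
  have hps : ∀ n : ℕ, ∑ j ∈ Finset.range n, 1 / (((j : ℝ) + 1) * ((j : ℝ) + 2))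
      = 1 - 1 / ((n : ℝ) + 1) := by
    intro n
    induction n with
    | zero => simp
    | succ n ih =>
      rw [Finset.sum_range_succ, ih]
      have h1 : ((n : ℝ) + 1) ≠ 0 := by positivity
      have h2 : ((n : ℝ) + 2) ≠ 0 := by positivity
      push_cast
      field_simp
      ring
  simp only [hps]
  have h : Tendsto (fun n : ℕ => 1 - 1 / ((n : ℝ) + 1)) atTop (nhds (1 - 0)) :=
    tendsto_const_nhds.sub tendsto_one_div_add_atTop_nhds_zero_nat
  simpa using h

lemma S3_le : ∑' m : ℕ, 1 / ((m : ℝ) + 1) ^ 3 ≤ 3 / 2 := by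
  have hsum := summable_cube
  rw [Summable.tsum_eq_zero_add hsum]
  have htail : ∑' m : ℕ, 1 / (((m + 1 : ℕ) : ℝ) + 1) ^ 3
      ≤ ∑' m : ℕ, (1 / 2) * (1 / (((m : ℝ) + 1) * ((m : ℝ) + 2))) := by
    apply Summable.tsum_le_tsum
    · intro m
      have he : (((m + 1 : ℕ) : ℝ) + 1) = (m : ℝ) + 2 := by push_cast; ring
      rw [he, mul_one_div, div_div]
      have p2 : (0:ℝ) < 2 * (((m : ℝ) + 1) * ((m : ℝ) + 2)) := by positivity
      apply one_div_le_one_div_of_le p2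
      nlinarith [sq_nonneg ((m : ℝ))]
    · exact (summable_nat_add_iff 1).2 hsum
    · exact tele_hasSum.summable.mul_left _
  have hteq : ∑' m : ℕ, (1 / 2 : ℝ) * (1 / (((m : ℝ) + 1) * ((m : ℝ) + 2))) = 1 / 2 := by
    rw [tsum_mul_left, tele_hasSum.tsum_eq, mul_one]
  have hfirst : (1 : ℝ) / (((0 : ℕ) : ℝ) + 1) ^ 3 = 1 := by norm_num
  rw [hfirst]
  linarith

/-- Auxiliary family of sums with minimal frequency `p`. -/
noncomputable def F (N p s : ℕ) : ℝ := ∑' m : ℕ, 1 / ((3 * m * N + p : ℕ) : ℝ) ^ s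

lemma omega_pos {p : ℕ} (hp : 1 ≤ p) (N m : ℕ) : (0 : ℝ) < ((3 * m * N + p : ℕ) : ℝ) := by
  exact_mod_cast (by omega : 0 < 3 * m * N + p)

lemma summable_F {N p : ℕ} (hp : 1 ≤ p) (hN : 1 ≤ N) {s : ℕ} (hs : 2 ≤ s) :
    Summable (fun m : ℕ => 1 / ((3 * m * N + p : ℕ) : ℝ) ^ s) := by
  have hb : Summable (fun m : ℕ => 1 / ((m : ℝ) + 1) ^ 2) := by
    have h := (summable_nat_add_iff 1).2 (Real.summable_one_div_nat_pow.mpr one_lt_two)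
    convert h using 2 with m
    · rfl
    push_cast; ring
  apply Summable.of_nonneg_of_le (fun m => by positivity) _ hb
  intro m
  have h1 : ((m : ℝ) + 1) ≤ ((3 * m * N + p : ℕ) : ℝ) := by
    have : m + 1 ≤ 3 * m * N + p := by nlinarith
    exact_mod_cast this
  have hω1 : (1 : ℝ) ≤ ((3 * m * N + p : ℕ) : ℝ) := by
    have h0 : (0 : ℝ) ≤ (m : ℝ) := Nat.cast_nonneg m
    linarith
  apply one_div_le_one_div_of_le (by positivity)
  calc ((m : ℝ) + 1) ^ 2 ≤ ((3 * m * N + p : ℕ) : ℝ) ^ 2 := by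
        apply pow_le_pow_left₀ (by positivity) h1
    _ ≤ ((3 * m * N + p : ℕ) : ℝ) ^ s := pow_le_pow_right₀ hω1 hs

lemma F_pos {N p : ℕ} (hp : 1 ≤ p) (hN : 1 ≤ N) {s : ℕ} (hs : 2 ≤ s) : 0 < F N p s := by
  apply Summable.tsum_pos (summable_F hp hN hs) (fun m => by positivity) 0
  have := omega_pos hp N 0
  positivity

/-- Lower bound: `p * F (r+1) < F r`. -/
lemma F_lower {N p : ℕ} (hp : 1 ≤ p) (hN : 1 ≤ N) {r : ℕ} (hr : 3 ≤ r) :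
    (p : ℝ) * F N p (r + 1) < F N p r := by
  unfold F
  rw [← tsum_mul_left]
  apply Summable.tsum_lt_tsum (i := 1)
  · intro m
    dsimp only
    have hω := omega_pos hp N m
    have hpω : (p : ℝ) ≤ ((3 * m * N + p : ℕ) : ℝ) := by
      exact_mod_cast Nat.le_add_left p (3 * m * N)
    rw [mul_one_div, div_le_div_iff₀ (by positivity) (by positivity)]
    rw [pow_succ]
    nlinarith [pow_pos hω r]
  · have hω := omega_pos hp N 1
    have hpω : (p : ℝ) < ((3 * 1 * N + p : ℕ) : ℝ) := by
      have : p < 3 * 1 * N + p := by omega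
      exact_mod_cast this
    rw [mul_one_div, div_lt_div_iff₀ (by positivity) (by positivity)]
    rw [pow_succ]
    nlinarith [pow_pos hω r]
  · exact (summable_F hp (by omega) (by omega)).mul_left _
  · exact summable_F hp (by omega) (by omega)

/-- Core tail estimate. -/
lemma est {N p : ℕ} (hp : 1 ≤ p) (hN : 3 ≤ N) {r : ℕ} (hr : 3 ≤ r) (hp2 : p ≤ 2 * N) (m : ℕ) :
    3 * ((m : ℝ) + 1) * N * (1 / ((3 * (m + 1) * N + p : ℕ) : ℝ) ^ (r + 1))
      ≤ (N : ℝ) / (p : ℝ) ^ (r + 1) * ((48 / 81) * (1 / ((m : ℝ) + 1) ^ 3)) := by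
  set q : ℝ := (m : ℝ) + 1 with hq
  have hq1 : (1 : ℝ) ≤ q := by
    rw [hq]
    have : (0:ℝ) ≤ (m:ℝ) := Nat.cast_nonneg m
    linarith
  have hωcast : ((3 * (m + 1) * N + p : ℕ) : ℝ) = 3 * q * N + p := by push_cast; ring
  have hNpos : (0 : ℝ) < N := by exact_mod_cast (by omega : 0 < N)
  have hppos : (0 : ℝ) < p := by exact_mod_cast hp
  have hω : (0 : ℝ) < 3 * q * N + p := by positivity
  have hp2' : (p : ℝ) ≤ 2 * N := by exact_mod_cast hp2
  have h1 : (1 : ℝ) / (3 * q * N + p) ≤ 2 / (3 * q) * (1 / p) := by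
    rw [div_mul_div_comm, div_le_div_iff₀ hω (by positivity)]
    nlinarith
  have h2 : ((1 : ℝ) / (3 * q * N + p)) ^ (r + 1) ≤ (2 / (3 * q) * (1 / (p : ℝ))) ^ (r + 1) :=
    pow_le_pow_left₀ (by positivity) h1 _
  have h3 : (2 / (3 * q)) ^ (r + 1) ≤ (2 / (3 * q)) ^ 4 := by
    apply pow_le_pow_of_le_one (by positivity) _ (by omega)
    rw [div_le_one (by positivity)]
    linarith
  have h4 : (2 / (3 * q) * (1 / (p : ℝ))) ^ (r + 1)
      ≤ (2 / (3 * q)) ^ 4 * (1 / (p : ℝ)) ^ (r + 1) := by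
    rw [mul_pow]
    exact mul_le_mul_of_nonneg_right h3 (by positivity)
  have h5 : ((1 : ℝ) / ((3 * (m + 1) * N + p : ℕ) : ℝ)) ^ (r + 1)
      ≤ (2 / (3 * q)) ^ 4 * (1 / (p : ℝ)) ^ (r + 1) := by
    rw [hωcast]; exact le_trans h2 h4
  have hfinal : 3 * q * N * ((2 / (3 * q)) ^ 4 * (1 / (p : ℝ)) ^ (r + 1))
      = (N : ℝ) / (p : ℝ) ^ (r + 1) * ((48 / 81) * (1 / q ^ 3)) := by
    rw [one_div_pow]
    have hq0 : q ≠ 0 := by positivity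
    have hp0 : ((p : ℝ)) ^ (r + 1) ≠ 0 := by positivity
    field_simp
    ring
  calc 3 * q * N * (1 / ((3 * (m + 1) * N + p : ℕ) : ℝ) ^ (r + 1))
      = 3 * q * N * ((1 / ((3 * (m + 1) * N + p : ℕ) : ℝ)) ^ (r + 1)) := by
        rw [one_div_pow]
    _ ≤ 3 * q * N * ((2 / (3 * q)) ^ 4 * (1 / (p : ℝ)) ^ (r + 1)) := by
        apply mul_le_mul_of_nonneg_left h5 (by positivity)
    _ = (N : ℝ) / (p : ℝ) ^ (r + 1) * ((48 / 81) * (1 / q ^ 3)) := hfinal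

/-- Upper bound: `F r < (p + N) * F (r+1)` when `p ≤ 2N`. -/
lemma F_upper {N p : ℕ} (hp : 1 ≤ p) (hN : 3 ≤ N) {r : ℕ} (hr : 3 ≤ r) (hp2 : p ≤ 2 * N) :
    F N p r < ((p : ℝ) + N) * F N p (r + 1) := by
  have hNpos : (0 : ℝ) < N := by exact_mod_cast (by omega : 0 < N)
  have hppos : (0 : ℝ) < p := by exact_mod_cast hp
  have hA : Summable (fun m : ℕ => 1 / ((3 * m * N + p : ℕ) : ℝ) ^ r) :=
    summable_F hp (by omega) (by omega)
  have hB : Summable (fun m : ℕ => 1 / ((3 * m * N + p : ℕ) : ℝ) ^ (r + 1)) :=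
    summable_F hp (by omega) (by omega)
  unfold F
  rw [← tsum_mul_left]
  rw [Summable.tsum_eq_zero_add hA, Summable.tsum_eq_zero_add (hB.mul_left _)]
  have hzero : (3 * 0 * N + p : ℕ) = p := by ring
  rw [hzero]
  set C : ℕ → ℝ := fun m => (N : ℝ) / (p : ℝ) ^ (r + 1) * ((48 / 81) * (1 / ((m : ℝ) + 1) ^ 3))
    with hC
  have hCsum : Summable C := by
    rw [hC]
    exact (summable_cube.mul_left _).mul_left _
  have hBtail : Summable (fun m : ℕ =>
      ((p : ℝ) + N) * (1 / ((3 * (m + 1) * N + p : ℕ) : ℝ) ^ (r + 1))) :=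
    ((summable_nat_add_iff 1).2 hB).mul_left _
  have hAtail : Summable (fun m : ℕ => 1 / ((3 * (m + 1) * N + p : ℕ) : ℝ) ^ r) :=
    (summable_nat_add_iff 1).2 hA
  have key1 : ∑' m : ℕ, 1 / ((3 * (m + 1) * N + p : ℕ) : ℝ) ^ r
      ≤ ∑' m : ℕ, (((p : ℝ) + N) * (1 / ((3 * (m + 1) * N + p : ℕ) : ℝ) ^ (r + 1)) + C m) := by
    apply Summable.tsum_le_tsum _ hAtail (hBtail.add hCsum)
    intro m
    have hωval : ((3 * (m + 1) * N + p : ℕ) : ℝ) = 3 * ((m : ℝ) + 1) * N + p := by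
      push_cast; ring
    have hωpos : (0 : ℝ) < 3 * ((m : ℝ) + 1) * N + p := by positivity
    have hsplit : 1 / ((3 * (m + 1) * N + p : ℕ) : ℝ) ^ r
        = (p : ℝ) * (1 / ((3 * (m + 1) * N + p : ℕ) : ℝ) ^ (r + 1))
          + 3 * ((m : ℝ) + 1) * N * (1 / ((3 * (m + 1) * N + p : ℕ) : ℝ) ^ (r + 1)) := by
      rw [hωval]
      rw [pow_succ]
      have h0 : (3 * ((m : ℝ) + 1) * N + p) ^ r ≠ 0 := by positivity
      have h0' : (3 * ((m : ℝ) + 1) * N + p) ≠ 0 := by positivity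
      field_simp
      ring
    rw [hsplit]
    have hest := est hp hN hr hp2 m
    have hBnn : (0 : ℝ) ≤ 1 / ((3 * (m + 1) * N + p : ℕ) : ℝ) ^ (r + 1) := by positivity
    have hmono : (p : ℝ) * (1 / ((3 * (m + 1) * N + p : ℕ) : ℝ) ^ (r + 1))
        ≤ ((p : ℝ) + N) * (1 / ((3 * (m + 1) * N + p : ℕ) : ℝ) ^ (r + 1)) := by
      apply mul_le_mul_of_nonneg_right _ hBnn
      linarith
    have hCm : C m = (N : ℝ) / (p : ℝ) ^ (r + 1) * ((48 / 81) * (1 / ((m : ℝ) + 1) ^ 3)) := rfl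
    rw [hCm]
    linarith
  have key2 : ∑' m : ℕ, (((p : ℝ) + N) * (1 / ((3 * (m + 1) * N + p : ℕ) : ℝ) ^ (r + 1)) + C m)
      = (∑' m : ℕ, ((p : ℝ) + N) * (1 / ((3 * (m + 1) * N + p : ℕ) : ℝ) ^ (r + 1)))
        + ∑' m, C m := Summable.tsum_add hBtail hCsum
  have key3 : ∑' m, C m < (N : ℝ) / (p : ℝ) ^ (r + 1) := by
    have heq : ∑' m, C m = (N : ℝ) / (p : ℝ) ^ (r + 1)
        * ((48 / 81) * ∑' m : ℕ, 1 / ((m : ℝ) + 1) ^ 3) := by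
      rw [hC, tsum_mul_left, tsum_mul_left]
    rw [heq]
    have hS3 := S3_le
    have hS3nn : (0 : ℝ) ≤ ∑' m : ℕ, 1 / ((m : ℝ) + 1) ^ 3 :=
      tsum_nonneg (fun m => by positivity)
    have hc : (0 : ℝ) < (N : ℝ) / (p : ℝ) ^ (r + 1) := by positivity
    nlinarith
  have hfirst : ((p : ℝ) + N) * (1 / (p : ℝ) ^ (r + 1))
      = 1 / (p : ℝ) ^ r + (N : ℝ) / (p : ℝ) ^ (r + 1) := by
    rw [pow_succ]
    field_simp
    try ring
  rw [hfirst]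
  have := le_trans key1 (le_of_eq key2)
  linarith

theorem stmt_18 (N k : ℕ) (hN : 3 ≤ N) (hk : 1 ≤ k) (hk' : k ≤ N - 1)
    (r : ℕ) (hr : 3 ≤ r) :
    gSum N k 0 r / gSum N k 0 (r + 1) < gSum N k 1 r / gSum N k 1 (r + 1) ∧
    gSum N k 1 r / gSum N k 1 (r + 1) < gSum N k 2 r / gSum N k 2 (r + 1) := by
  have hkN : k < N := by omega
  have h0 : gSum N k 0 r = F N k r := by rw [gSum_eq]; simp [F]
  have h0' : gSum N k 0 (r + 1) = F N k (r + 1) := by rw [gSum_eq]; simp [F]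
  have h1 : gSum N k 1 r = F N (N + k) r := by rw [gSum_eq]; simp [F, one_mul]
  have h1' : gSum N k 1 (r + 1) = F N (N + k) (r + 1) := by rw [gSum_eq]; simp [F, one_mul]
  have h2 : gSum N k 2 r = F N (2 * N + k) r := by rw [gSum_eq]; simp [F]
  have h2' : gSum N k 2 (r + 1) = F N (2 * N + k) (r + 1) := by rw [gSum_eq]; simp [F]
  have hp1 : 1 ≤ N + k := by omega
  have hp2 : 1 ≤ 2 * N + k := by omega
  have hd0 : 0 < F N k (r + 1) := F_pos hk (by omega) (by omega)
  have hd1 : 0 < F N (N + k) (r + 1) := F_pos hp1 (by omega) (by omega)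
  have hd2 : 0 < F N (2 * N + k) (r + 1) := F_pos hp2 (by omega) (by omega)
  have hu0 : F N k r < ((k : ℝ) + N) * F N k (r + 1) := F_upper hk hN hr (by omega)
  have hl1 : ((N + k : ℕ) : ℝ) * F N (N + k) (r + 1) < F N (N + k) r :=
    F_lower hp1 (by omega) hr
  have hu1 : F N (N + k) r < (((N + k : ℕ) : ℝ) + N) * F N (N + k) (r + 1) :=
    F_upper hp1 hN hr (by omega)
  have hl2 : ((2 * N + k : ℕ) : ℝ) * F N (2 * N + k) (r + 1) < F N (2 * N + k) r :=
    F_lower hp2 (by omega) hr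
  have c1 : ((N + k : ℕ) : ℝ) = (N : ℝ) + k := by push_cast; ring
  have c2 : ((2 * N + k : ℕ) : ℝ) = 2 * (N : ℝ) + k := by push_cast; ring
  rw [c1] at hl1 hu1
  rw [c2] at hl2
  constructor
  · rw [h0, h0', h1, h1']
    have hA : F N k r / F N k (r + 1) < (k : ℝ) + N := by
      rw [div_lt_iff₀ hd0]; linarith
    have hB : (N : ℝ) + k < F N (N + k) r / F N (N + k) (r + 1) := by
      rw [lt_div_iff₀ hd1]; linarith
    linarith
  · rw [h1, h1', h2, h2']
    have hA : F N (N + k) r / F N (N + k) (r + 1) < ((N : ℝ) + k) + N := by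
      rw [div_lt_iff₀ hd1]; linarith
    have hB : 2 * (N : ℝ) + k < F N (2 * N + k) r / F N (2 * N + k) (r + 1) := by
      rw [lt_div_iff₀ hd2]; linarith
    linarith
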